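/- arXiv:1806.10887 — 3 statements merged into one kernel-verified Lean document; each statement's English description precedes it below -/
import Mathlib

section
/- Let 0 < a < z_0, α > 0 with α ≠ 1, and let Φ : [0,1] → ℝ be continuous with sup norm ‖Φ‖_∞. Define for continuous g : [a, z_0] → ℝ the operator G[g](x) = (α z_0 / x^α) ∫_{z_0}^{x} (z/(z_0 - z))^α ∫_{z}^{z_0} Φ(z/z') (z')^{-2} (z_0 - z')^{α-1} g(z') dz' dz for x ∈ [a, z_0]. Then ‖G[g]‖_∞ ≤ (1/|α - 1|) ‖Φ‖_∞ | z_0/a - (z_0/a)^α | · ‖g‖_∞. -/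
open MeasureTheory intervalIntegral Set

/-- abs of set integral bounded by integral of dominating function; no measurability of f needed -/
lemma aux_abs_integral_le {s : Set ℝ} (hs : MeasurableSet s) {f D : ℝ → ℝ}
    (hD : IntegrableOn D s) (h : ∀ z ∈ s, |f z| ≤ D z) :
    |∫ z in s, f z| ≤ ∫ z in s, D z := by
  calc |∫ z in s, f z| ≤ ∫ z in s, |f z| := by
        simpa using norm_integral_le_integral_norm (μ := volume.restrict s) f
    _ ≤ ∫ z in s, D z :=
        integral_mono_of_nonneg (ae_of_all _ fun z => abs_nonneg _) hD
          ((ae_restrict_iff' hs).mpr (ae_of_all _ h))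

lemma aux_key_mono {α t T : ℝ} (hα : 0 < α) (ht : 1 ≤ t) (htT : t ≤ T) :
    |t ^ α - t| ≤ |T ^ α - T| := by
  have ht0 : (0:ℝ) < t := lt_of_lt_of_le one_pos ht
  have hT : 1 ≤ T := ht.trans htT
  have hT0 : (0:ℝ) < T := lt_of_lt_of_le one_pos hT
  have ee : ∀ u : ℝ, 0 < u → u ^ α = u * u ^ (α - 1) := by
    intro u hu
    have h := Real.rpow_add hu 1 (α - 1)
    rw [show (1:ℝ) + (α - 1) = α by ring, Real.rpow_one] at h
    exact h
  rcases le_or_gt 1 α with h1 | h1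
  · -- α ≥ 1
    have ht' : t ≤ t ^ α := by
      nth_rewrite 1 [← Real.rpow_one t]
      exact Real.rpow_le_rpow_of_exponent_le ht h1
    have hT' : T ≤ T ^ α := by
      nth_rewrite 1 [← Real.rpow_one T]
      exact Real.rpow_le_rpow_of_exponent_le hT h1
    rw [abs_of_nonneg (by linarith), abs_of_nonneg (by linarith)]
    have e1 : t ^ α - t = t * (t ^ (α - 1) - 1) := by rw [ee t ht0]; ring
    have e2 : T ^ α - T = T * (T ^ (α - 1) - 1) := by rw [ee T hT0]; ring
    rw [e1, e2]
    have h3 : t ^ (α - 1) ≤ T ^ (α - 1) := Real.rpow_le_rpow (by linarith) htT (by linarith)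
    have h4 : (1:ℝ) ≤ t ^ (α - 1) := Real.one_le_rpow ht (by linarith)
    exact mul_le_mul htT (by linarith) (by linarith) (by linarith)
  · -- α < 1
    have ht' : t ^ α ≤ t := by
      nth_rewrite 2 [← Real.rpow_one t]
      exact Real.rpow_le_rpow_of_exponent_le ht h1.le
    have hT' : T ^ α ≤ T := by
      nth_rewrite 2 [← Real.rpow_one T]
      exact Real.rpow_le_rpow_of_exponent_le hT h1.le
    rw [abs_of_nonpos (by linarith), abs_of_nonpos (by linarith)]
    have e1 : -(t ^ α - t) = t * (1 - t ^ (α - 1)) := by rw [ee t ht0]; ring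
    have e2 : -(T ^ α - T) = T * (1 - T ^ (α - 1)) := by rw [ee T hT0]; ring
    rw [e1, e2]
    have h3 : T ^ (α - 1) ≤ t ^ (α - 1) :=
      Real.rpow_le_rpow_of_nonpos ht0 htT (by linarith)
    have h4 : t ^ (α - 1) ≤ 1 := Real.rpow_le_one_of_one_le_of_nonpos ht (by linarith)
    exact mul_le_mul htT (by linarith) (by linarith) (by linarith)

lemma aux_intble_sub_rpow (z0 z α : ℝ) (hα : 0 < α) :
    IntervalIntegrable (fun t => (z0 - t) ^ (α - 1)) volume z z0 := by
  have h := (intervalIntegrable_rpow' (a := z0 - z) (b := z0 - z0) (r := α - 1)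
    (by linarith)).comp_sub_left z0
  simpa using h

lemma aux_integral_sub_rpow (z0 z α : ℝ) (hα : 0 < α) (hz : z ≤ z0) :
    ∫ t in z..z0, (z0 - t) ^ (α - 1) = (z0 - z) ^ α / α := by
  rw [show (∫ t in z..z0, (z0 - t) ^ (α - 1)) = ∫ t in z..z0, (fun u : ℝ => u ^ (α - 1)) (z0 - t) from rfl,
    intervalIntegral.integral_comp_sub_left (fun u : ℝ => u ^ (α - 1)) z0]
  simp only [sub_self]
  rw [integral_rpow (Or.inl (by linarith))]
  rw [Real.zero_rpow (by linarith), sub_add_cancel]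
  ring_nf

/-- Sup-norm estimate for the operator `G` in the proof of Lemma 5.4. -/
theorem stmt_1 (z0 a α MΦ Mg : ℝ) (Φ g : ℝ → ℝ)
    (ha : 0 < a) (haz0 : a < z0) (hα : 0 < α) (hα1 : α ≠ 1)
    (hΦcont : ContinuousOn Φ (Icc 0 1))
    (hΦ : ∀ t ∈ Icc (0:ℝ) 1, |Φ t| ≤ MΦ)
    (hgcont : ContinuousOn g (Icc a z0))
    (hg : ∀ z ∈ Icc a z0, |g z| ≤ Mg) :
    ∀ x ∈ Icc a z0,
      |(α * z0 / x ^ α) *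
          ∫ z in z0..x, (z / (z0 - z)) ^ α *
            ∫ z' in z..z0, Φ (z / z') * (z') ^ (-(2:ℝ)) * (z0 - z') ^ (α - 1) * g z'|
        ≤ (1 / |α - 1|) * MΦ * |z0 / a - (z0 / a) ^ α| * Mg := by
  intro x hx
  obtain ⟨hax, hxz0⟩ := hx
  have hx0 : (0:ℝ) < x := lt_of_lt_of_le ha hax
  have hz00 : (0:ℝ) < z0 := ha.trans haz0
  have hMΦ : 0 ≤ MΦ := le_trans (abs_nonneg _) (hΦ 0 ⟨le_refl _, zero_le_one⟩)
  have hMg : 0 ≤ Mg := le_trans (abs_nonneg _) (hg a ⟨le_refl _, haz0.le⟩)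
  have hxα : (0:ℝ) < x ^ α := Real.rpow_pos_of_pos hx0 α
  have habs1 : |α - 1| ≠ 0 := abs_ne_zero.mpr (sub_ne_zero.mpr hα1)
  set inner : ℝ → ℝ := fun z =>
    ∫ z' in z..z0, Φ (z / z') * (z') ^ (-(2:ℝ)) * (z0 - z') ^ (α - 1) * g z' with hinner
  -- inner bound
  have inner_bound : ∀ z, a ≤ z → z ≤ z0 →
      |inner z| ≤ MΦ * z ^ (-(2:ℝ)) * ((z0 - z) ^ α / α) * Mg := by
    intro z haz hzz0
    have hz0' : (0:ℝ) < z := lt_of_lt_of_le ha haz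
    have hint : IntegrableOn
        (fun z' => MΦ * z ^ (-(2:ℝ)) * (z0 - z') ^ (α - 1) * Mg) (Ioc z z0) volume :=
      (((aux_intble_sub_rpow z0 z α hα).const_mul (MΦ * z ^ (-(2:ℝ)))).mul_const Mg).1
    have ptwise : ∀ z' ∈ Ioc z z0,
        |Φ (z / z') * (z') ^ (-(2:ℝ)) * (z0 - z') ^ (α - 1) * g z'|
          ≤ MΦ * z ^ (-(2:ℝ)) * (z0 - z') ^ (α - 1) * Mg := by
      intro z' hz'
      obtain ⟨hzz', hz'z0⟩ := hz'
      have hz'0 : (0:ℝ) < z' := hz0'.trans hzz'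
      have hφ : |Φ (z / z')| ≤ MΦ :=
        hΦ _ ⟨by positivity, by rw [div_le_one hz'0]; linarith⟩
      have h2 : |(z') ^ (-(2:ℝ))| ≤ z ^ (-(2:ℝ)) := by
        rw [abs_of_nonneg (Real.rpow_nonneg hz'0.le _)]
        exact Real.rpow_le_rpow_of_nonpos hz0' hzz'.le (by norm_num)
      have h3 : |(z0 - z') ^ (α - 1)| = (z0 - z') ^ (α - 1) :=
        abs_of_nonneg (Real.rpow_nonneg (by linarith) _)
      have h4 : |g z'| ≤ Mg := hg z' ⟨by linarith, hz'z0⟩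
      have hnn : (0:ℝ) ≤ (z0 - z') ^ (α - 1) := Real.rpow_nonneg (by linarith) _
      have hz2 : (0:ℝ) ≤ z ^ (-(2:ℝ)) := Real.rpow_nonneg hz0'.le _
      rw [abs_mul, abs_mul, abs_mul, h3]
      apply mul_le_mul _ h4 (abs_nonneg _) (by positivity)
      apply mul_le_mul _ le_rfl hnn (by positivity)
      exact mul_le_mul hφ h2 (abs_nonneg _) hMΦ
    calc |inner z| ≤ ∫ z' in Ioc z z0, MΦ * z ^ (-(2:ℝ)) * (z0 - z') ^ (α - 1) * Mg := by
          rw [hinner]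
          simp only
          rw [intervalIntegral.integral_of_le hzz0]
          exact aux_abs_integral_le measurableSet_Ioc hint ptwise
      _ = MΦ * z ^ (-(2:ℝ)) * ((z0 - z) ^ α / α) * Mg := by
          rw [← intervalIntegral.integral_of_le hzz0]
          have hre : ∀ z' : ℝ, MΦ * z ^ (-(2:ℝ)) * (z0 - z') ^ (α - 1) * Mg
              = (MΦ * z ^ (-(2:ℝ)) * Mg) * (z0 - z') ^ (α - 1) := fun z' => by ring
          simp_rw [hre]
          rw [intervalIntegral.integral_const_mul, aux_integral_sub_rpow z0 z α hα hzz0]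
          ring
  -- outer pointwise bound
  have outer_ptwise : ∀ z ∈ Ioc x z0,
      |(z / (z0 - z)) ^ α * inner z| ≤ MΦ * Mg / α * z ^ (α - 2) := by
    intro z hz
    obtain ⟨hxz, hzz0⟩ := hz
    have hz0' : (0:ℝ) < z := hx0.trans hxz
    have hrhs : (0:ℝ) ≤ MΦ * Mg / α * z ^ (α - 2) := by positivity
    rcases eq_or_lt_of_le hzz0 with heq | hlt
    · rw [hinner]
      simp only [heq, intervalIntegral.integral_same, mul_zero, abs_zero]
      positivity
    · have hz0z : (0:ℝ) < z0 - z := by linarith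
      have hfac : (0:ℝ) ≤ (z / (z0 - z)) ^ α := Real.rpow_nonneg (by positivity) α
      rw [abs_mul, abs_of_nonneg hfac]
      have hib := inner_bound z (le_of_lt (lt_of_le_of_lt hax hxz)) hzz0
      calc (z / (z0 - z)) ^ α * |inner z|
          ≤ (z / (z0 - z)) ^ α * (MΦ * z ^ (-(2:ℝ)) * ((z0 - z) ^ α / α) * Mg) :=
            mul_le_mul_of_nonneg_left hib hfac
        _ = MΦ * Mg / α * z ^ (α - 2) := by
            rw [Real.div_rpow hz0'.le hz0z.le]
            have hne : (z0 - z) ^ α ≠ 0 := ne_of_gt (Real.rpow_pos_of_pos hz0z α)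
            have hzz : z ^ (α - 2) = z ^ α * z ^ (-(2:ℝ)) := by
              rw [show α - 2 = α + (-2) by ring, Real.rpow_add hz0']
            rw [hzz]
            field_simp
  -- outer integral bound
  have hmain : |∫ z in x..z0, (z / (z0 - z)) ^ α * inner z|
      ≤ MΦ * Mg / α * ((z0 ^ (α - 1) - x ^ (α - 1)) / (α - 1)) := by
    have hD : IntegrableOn (fun z => MΦ * Mg / α * z ^ (α - 2)) (Ioc x z0) volume := by
      apply (ContinuousOn.integrableOn_Icc ?_).mono_set Ioc_subset_Icc_self
      exact continuousOn_const.mul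
        (continuousOn_id.rpow_const fun z hz => Or.inl (ne_of_gt (lt_of_lt_of_le hx0 hz.1)))
    rw [intervalIntegral.integral_of_le hxz0]
    calc |∫ z in Ioc x z0, (z / (z0 - z)) ^ α * inner z|
        ≤ ∫ z in Ioc x z0, MΦ * Mg / α * z ^ (α - 2) :=
          aux_abs_integral_le measurableSet_Ioc hD outer_ptwise
      _ = MΦ * Mg / α * ((z0 ^ (α - 1) - x ^ (α - 1)) / (α - 1)) := by
          rw [← intervalIntegral.integral_of_le hxz0, intervalIntegral.integral_const_mul,
            integral_rpow (Or.inr ⟨by intro h; exact hα1 (by linarith), 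
              notMem_uIcc_of_lt hx0 hz00⟩)]
          rw [show α - 2 + 1 = α - 1 by ring]
  -- put it together
  rw [abs_mul, abs_of_pos (show (0:ℝ) < α * z0 / x ^ α by positivity),
    intervalIntegral.integral_symm x z0, abs_neg]
  have step1 : α * z0 / x ^ α * |∫ z in x..z0, (z / (z0 - z)) ^ α * inner z|
      ≤ α * z0 / x ^ α * (MΦ * Mg / α * ((z0 ^ (α - 1) - x ^ (α - 1)) / (α - 1))) :=
    mul_le_mul_of_nonneg_left hmain (by positivity)
  refine le_trans step1 ?_
  -- the quotient equals its absolute-value form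
  have hQ : (z0 ^ (α - 1) - x ^ (α - 1)) / (α - 1)
      = |z0 ^ (α - 1) - x ^ (α - 1)| / |α - 1| := by
    rcases lt_or_gt_of_ne hα1 with h1 | h1
    · have hmono : z0 ^ (α - 1) ≤ x ^ (α - 1) :=
        Real.rpow_le_rpow_of_nonpos hx0 hxz0 (by linarith)
      rw [abs_of_nonpos (by linarith), abs_of_neg (show α - 1 < 0 by linarith),
        neg_div_neg_eq]
    · have hmono : x ^ (α - 1) ≤ z0 ^ (α - 1) :=
        Real.rpow_le_rpow hx0.le hxz0 (by linarith)
      rw [abs_of_nonneg (by linarith), abs_of_pos (show (0:ℝ) < α - 1 by linarith)]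
  rw [hQ]
  -- key monotonicity estimate
  have key : z0 * |z0 ^ (α - 1) - x ^ (α - 1)| / x ^ α ≤ |z0 / a - (z0 / a) ^ α| := by
    have e1 : z0 * |z0 ^ (α - 1) - x ^ (α - 1)| / x ^ α
        = |(z0 / x) ^ α - z0 / x| := by
      rw [show z0 * |z0 ^ (α - 1) - x ^ (α - 1)| / x ^ α
          = |z0 * (z0 ^ (α - 1) - x ^ (α - 1)) / x ^ α| by
        rw [abs_div, abs_mul, abs_of_pos hz00, abs_of_pos hxα]]
      congr 1
      rw [Real.rpow_sub hz00, Real.rpow_sub hx0, Real.rpow_one, Real.rpow_one,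
        Real.div_rpow hz00.le hx0.le]
      field_simp
    rw [e1, abs_sub_comm (z0 / a)]
    have ht1 : (1:ℝ) ≤ z0 / x := (one_le_div hx0).mpr hxz0
    have ht2 : z0 / x ≤ z0 / a := by gcongr
    exact aux_key_mono hα ht1 ht2
  have h8 : α * z0 / x ^ α * (MΦ * Mg / α *
        (|z0 ^ (α - 1) - x ^ (α - 1)| / |α - 1|))
      = z0 * |z0 ^ (α - 1) - x ^ (α - 1)| / x ^ α * (MΦ * Mg / |α - 1|) := by
    field_simp
  have h9 : 1 / |α - 1| * MΦ * |z0 / a - (z0 / a) ^ α| * Mg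
      = |z0 / a - (z0 / a) ^ α| * (MΦ * Mg / |α - 1|) := by ring
  rw [h8, h9]
  exact mul_le_mul_of_nonneg_right key (by positivity)
end

section
/- Under the assumptions of the boundedness lemma for T_ξ, if additionally Re(ξ) > 2β̄ - β̲ - μ̲, then the operator norm of T_ξ on L¹_w is strictly less than 1, hence 1 lies in the resolvent set of T_ξ and I - T_ξ is invertible on L¹_w. -/
open MeasureTheory Set

/-- Lemma 4.3 (Lem-Res): if `Re ξ > 2β̄ - β̲ - μ̲` then `‖T_ξ‖ < 1` and `I - T_ξ`
is invertible (Neumann series). Stated for a bounded operator `T` on the Banach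
space `L¹_w` satisfying the norm bound of Lemma 4.1. -/
theorem stmt_7 {X : Type*} [NormedAddCommGroup X] [NormedSpace ℝ X] [CompleteSpace X]
    (T : X →L[ℝ] X) (ξ βl μl βu : ℝ)
    (hlow : 0 < βl + μl) (hβu : 0 ≤ βu)
    (hnorm : ‖T‖ ≤ 2 * βu / (ξ + βl + μl))
    (hξ : 2 * βu - βl - μl < ξ) :
    ‖T‖ < 1 ∧ IsUnit (1 - T : X →L[ℝ] X) := by
  have hden : 0 < ξ + βl + μl := by linarith
  have hlt : ‖T‖ < 1 := by
    refine hnorm.trans_lt ?_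
    rw [div_lt_one hden]
    linarith
  exact ⟨hlt, (Units.oneSub T hlt).isUnit⟩
end

section
/- Let z_0 ≥ m > 0, b_0 > 0, b(z) = (b_0/z_0) z(z_0 - z), and suppose β_m, μ are measurable with μ̲ - μ̄ + β_m(y) ≥ C > 0 for all y ∈ [0, z_0]. Then ∫_0^{z_0} ∫_{z'}^{z_0} exp(-∫_{z'}^z (μ̲ - μ̄ + β_m(y))/b(y) dy) · (1/b(z)) dz dz' ≤ z_0/C < ∞. -/
open MeasureTheory intervalIntegral Set
open Filter Topology

/-- Example 3.3(a): verification of Assumption (A5) for logistic growth. -/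
theorem stmt_12 (z0 m b0 C μl μu : ℝ) (βm : ℝ → ℝ)
    (hm : 0 < m) (hmz0 : m ≤ z0) (hb0 : 0 < b0) (hC : 0 < C)
    (hβm : Measurable βm)
    (hlower : ∀ y ∈ Icc (0:ℝ) z0, C ≤ μl - μu + βm y) :
    (∫ z' in (0:ℝ)..z0,
        ∫ z in z'..z0,
          Real.exp (-∫ y in z'..z, (μl - μu + βm y) / ((b0 / z0) * y * (z0 - y))) *
            (1 / ((b0 / z0) * z * (z0 - z))))
      ≤ z0 / C := by
  have hz0 : (0:ℝ) < z0 := lt_of_lt_of_le hm hmz0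
  set k : ℝ := b0 / z0 with hk
  have hkpos : 0 < k := div_pos hb0 hz0
  set f : ℝ → ℝ := fun y => (μl - μu + βm y) / (k * y * (z0 - y)) with hfdef
  set binv : ℝ → ℝ := fun z => 1 / (k * z * (z0 - z)) with hbinvdef
  have hbinv_meas : Measurable binv := by
    apply Measurable.div measurable_const
    exact ((measurable_const.mul measurable_id).mul (measurable_const.sub measurable_id))
  have hbpos : ∀ z : ℝ, 0 < z → z < z0 → 0 < k * z * (z0 - z) := fun z h1 h2 =>
    mul_pos (mul_pos hkpos h1) (sub_pos.2 h2)
  have hbinv_contAt : ∀ z : ℝ, 0 < z → z < z0 → ContinuousAt binv z := by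
    intro z h1 h2
    exact ContinuousAt.div continuousAt_const
      (((continuousAt_const.mul continuousAt_id).mul (continuousAt_const.sub continuousAt_id)))
      (ne_of_gt (hbpos z h1 h2))
  have hbinv_cont : ∀ a b : ℝ, 0 < a → b < z0 → a ≤ b → ContinuousOn binv (Icc a b) := by
    intro a b ha hb _
    intro z hz
    exact (hbinv_contAt z (lt_of_lt_of_le ha hz.1) (lt_of_le_of_lt hz.2 hb)).continuousWithinAt
  -- main pointwise bound
  have main : ∀ z' ∈ Set.uIoc (0:ℝ) z0,
      ‖∫ z in z'..z0, Real.exp (-∫ y in z'..z, f y) * binv z‖ ≤ 1 / C := by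
    rw [Set.uIoc_of_le hz0.le]
    intro z' hz'
    obtain ⟨hz'pos, hz'le⟩ := hz'
    have hCinv : (0:ℝ) ≤ 1 / C := by positivity
    rcases eq_or_lt_of_le hz'le with rfl | hz'lt
    · rw [intervalIntegral.integral_same, norm_zero]; exact hCinv
    set g : ℝ → ℝ := fun z => Real.exp (-∫ y in z'..z, f y) * binv z with hgdef
    by_cases hgint : IntervalIntegrable g volume z' z0
    swap
    · rw [intervalIntegral.integral_undef hgint]
      simpa using hCinv
    have hg_nonneg : ∀ z ∈ Icc z' z0, 0 ≤ g z := by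
      intro z hz
      apply mul_nonneg (Real.exp_nonneg _)
      apply one_div_nonneg.2
      apply mul_nonneg (mul_nonneg hkpos.le (le_trans hz'pos.le hz.1))
      exact sub_nonneg.2 hz.2
    have hF_nonneg : 0 ≤ ∫ z in z'..z0, g z :=
      intervalIntegral.integral_nonneg hz'le hg_nonneg
    by_cases hfall : ∀ t ∈ Ico z' z0, IntervalIntegrable f volume z' t
    · -- genuine case
      -- bound for each t < z0
      have key : ∀ t ∈ Ico z' z0, (∫ z in z'..t, g z) ≤ 1 / C := by
        intro t ht
        obtain ⟨hz't, htz0⟩ := ht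
        set J : ℝ → ℝ := fun z => ∫ y in z'..z, binv y with hJdef
        set h : ℝ → ℝ := fun z => Real.exp (-(C * J z)) * binv z with hhdef
        set H : ℝ → ℝ := fun z => -(1/C) * Real.exp (-(C * J z)) with hHdef
        have hsub : Icc z' t ⊆ Icc z' z0 := Icc_subset_Icc le_rfl htz0.le
        have hbinv_ii : ∀ z ∈ Icc z' t, IntervalIntegrable binv volume z' z := by
          intro z hz
          apply ContinuousOn.intervalIntegrable
          rw [Set.uIcc_of_le hz.1]
          exact hbinv_cont z' z hz'pos (lt_of_le_of_lt hz.2 htz0) hz.1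
        have hJcont : ContinuousOn J (Icc z' t) := by
          have := intervalIntegral.continuousOn_primitive_interval'
            (hbinv_ii t ⟨hz't, le_rfl⟩) (left_mem_uIcc (a := z') (b := t))
          rwa [Set.uIcc_of_le hz't] at this
        have hHd : ∀ z ∈ Set.uIcc z' t, HasDerivAt H (h z) z := by
          rw [Set.uIcc_of_le hz't]
          intro z hz
          have hz1 : 0 < z := lt_of_lt_of_le hz'pos hz.1
          have hz2 : z < z0 := lt_of_le_of_lt hz.2 htz0
          have hJd : HasDerivAt J (binv z) z := by
            apply intervalIntegral.integral_hasDerivAt_right (hbinv_ii z hz)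
            · exact hbinv_meas.stronglyMeasurable.stronglyMeasurableAtFilter
            · exact hbinv_contAt z hz1 hz2
          have := ((((hJd.const_mul C).neg).exp).const_mul (-(1/C)))
          refine this.congr_deriv ?_
          simp only [hhdef, Pi.neg_apply]
          field_simp
        have hh_ii : IntervalIntegrable h volume z' t := by
          apply ContinuousOn.intervalIntegrable
          rw [Set.uIcc_of_le hz't]
          have : ContinuousOn (fun z => Real.exp (-(C * J z))) (Icc z' t) :=
            Real.continuous_exp.comp_continuousOn ((continuousOn_const.mul hJcont).neg)
          exact this.mul (hbinv_cont z' t hz'pos htz0 hz't)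
        have hg_ii : IntervalIntegrable g volume z' t :=
          hgint.mono_set (by rw [Set.uIcc_of_le hz't, Set.uIcc_of_le hz'le]; exact hsub)
        have hgh : ∀ z ∈ Icc z' t, g z ≤ h z := by
          intro z hz
          have hz2 : z < z0 := lt_of_le_of_lt hz.2 htz0
          have hbnn : 0 ≤ binv z := le_of_lt (one_div_pos.2 (hbpos z (lt_of_lt_of_le hz'pos hz.1) hz2))
          apply mul_le_mul_of_nonneg_right _ hbnn
          apply Real.exp_le_exp.2
          apply neg_le_neg
          -- C * J z ≤ ∫ f
          have hfz : IntervalIntegrable f volume z' z := hfall z ⟨hz.1, hz2⟩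
          have hCb : IntervalIntegrable (fun y => C * binv y) volume z' z :=
            (hbinv_ii z hz).const_mul C
          have hmono : (∫ y in z'..z, C * binv y) ≤ ∫ y in z'..z, f y := by
            apply intervalIntegral.integral_mono_on hz.1 hCb hfz
            intro y hy
            have hy1 : 0 < y := lt_of_lt_of_le hz'pos hy.1
            have hy2 : y < z0 := lt_of_le_of_lt hy.2 hz2
            have hbpy := hbpos y hy1 hy2
            have : C * binv y = C / (k * y * (z0 - y)) := by
              rw [hbinvdef]; ring
            rw [this, hfdef]
            exact div_le_div_of_nonneg_right (hlower y ⟨hy1.le, hy2.le⟩) hbpy.le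
          calc C * J z = ∫ y in z'..z, C * binv y := by
                rw [hJdef]; exact (intervalIntegral.integral_const_mul C binv).symm
            _ ≤ ∫ y in z'..z, f y := hmono
        have h1 : (∫ z in z'..t, g z) ≤ ∫ z in z'..t, h z :=
          intervalIntegral.integral_mono_on hz't hg_ii hh_ii hgh
        have h2 : (∫ z in z'..t, h z) = H t - H z' :=
          intervalIntegral.integral_eq_sub_of_hasDerivAt hHd hh_ii
        have hJz' : J z' = 0 := intervalIntegral.integral_same
        have h3 : H t - H z' ≤ 1 / C := by
          rw [hHdef]
          simp only [hJz', mul_zero, neg_zero, Real.exp_zero, mul_one]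
          have : 0 ≤ Real.exp (-(C * J t)) := Real.exp_nonneg _
          nlinarith [hC, this]
        linarith
      -- pass to the limit t → z0
      have hPcont : ContinuousOn (fun t => ∫ z in z'..t, g z) (Icc z' z0) := by
        have := intervalIntegral.continuousOn_primitive_interval'
          hgint (left_mem_uIcc (a := z') (b := z0))
        rwa [Set.uIcc_of_le hz'le] at this
      have hcwa : ContinuousWithinAt (fun t => ∫ z in z'..t, g z) (Ico z' z0) z0 :=
        (hPcont z0 ⟨hz'le, le_rfl⟩).mono Ico_subset_Icc_self
      have hne : (𝓝[Ico z' z0] z0).NeBot := by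
        apply mem_closure_iff_nhdsWithin_neBot.1
        rw [closure_Ico (ne_of_lt hz'lt)]
        exact ⟨hz'le, le_rfl⟩
      have hlim : Tendsto (fun t => ∫ z in z'..t, g z) (𝓝[Ico z' z0] z0)
          (𝓝 (∫ z in z'..z0, g z)) := hcwa
      have hfinal : (∫ z in z'..z0, g z) ≤ 1 / C := by
        apply le_of_tendsto hlim
        filter_upwards [self_mem_nhdsWithin] with t ht
        exact key t ht
      rw [Real.norm_eq_abs, abs_of_nonneg hF_nonneg]
      exact hfinal
    · -- degenerate case: exponent integral undefined past some t0; contradiction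
      exfalso
      push_neg at hfall
      obtain ⟨t0, ht0, hnint⟩ := hfall
      have ht0z0 : t0 < z0 := ht0.2
      have ht0z' : z' ≤ t0 := ht0.1
      have hI0 : ∀ z ∈ Ioc t0 z0, (∫ y in z'..z, f y) = 0 := by
        intro z hz
        apply intervalIntegral.integral_undef
        intro h
        apply hnint
        apply h.mono_set
        rw [Set.uIcc_of_le ht0z', Set.uIcc_of_le (le_trans ht0z' hz.1.le)]
        exact Icc_subset_Icc le_rfl hz.1.le
      have hEq : EqOn g binv (Ioc t0 z0) := by
        intro z hz
        rw [hgdef]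
        simp only [hI0 z hz, neg_zero, Real.exp_zero, one_mul]
      have hgsub : IntervalIntegrable g volume t0 z0 := by
        apply hgint.mono_set
        rw [Set.uIcc_of_le ht0z0.le, Set.uIcc_of_le hz'le]
        exact Icc_subset_Icc ht0z' le_rfl
      have hbii : IntegrableOn binv (Ioc t0 z0) volume := by
        have := (intervalIntegrable_iff_integrableOn_Ioc_of_le ht0z0.le).1 hgsub
        exact this.congr_fun hEq measurableSet_Ioc
      -- but binv dominates (z - z0)⁻¹ on Ioc t0 z0
      have hdom : IntervalIntegrable (fun z => (z - z0)⁻¹) volume t0 z0 := by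
        rw [intervalIntegrable_iff_integrableOn_Ioc_of_le ht0z0.le]
        apply Integrable.mono (hbii.smul (k * z0))
        · exact ((measurable_id.sub measurable_const).inv).aestronglyMeasurable
        · rw [ae_restrict_iff' measurableSet_Ioc]
          apply ae_of_all
          intro z hz
          rcases eq_or_lt_of_le hz.2 with rfl | hzlt
          · simp only [sub_self, inv_zero, norm_zero]; exact norm_nonneg _
          · have hzpos : 0 < z := lt_of_lt_of_le hz'pos (le_trans ht0z' hz.1.le)
            have hbz : 0 < k * z * (z0 - z) := hbpos z hzpos hzlt
            have hk0 : k ≠ 0 := ne_of_gt hkpos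
            have hzz : z ≠ 0 := ne_of_gt hzpos
            have hsz : z0 - z ≠ 0 := ne_of_gt (sub_pos.2 hzlt)
            have e1 : ‖(z - z0)⁻¹‖ = (z0 - z)⁻¹ := by
              rw [Real.norm_eq_abs, abs_inv, abs_sub_comm, abs_of_pos (sub_pos.2 hzlt)]
            have e2 : (k * z0) • binv z = z0 / (z * (z0 - z)) := by
              simp only [hbinvdef, smul_eq_mul]
              field_simp
            have hp1 : 0 < z * (z0 - z) := mul_pos hzpos (sub_pos.2 hzlt)
            simp only [Pi.smul_apply]
            rw [e1, e2, Real.norm_eq_abs, abs_of_pos (div_pos hz0 hp1)]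
            rw [inv_eq_one_div, div_le_div_iff₀ (sub_pos.2 hzlt) hp1]
            nlinarith [hz.2, hzpos, sub_pos.2 hzlt]
      rw [intervalIntegrable_sub_inv_iff] at hdom
      rcases hdom with h | h
      · exact absurd h (ne_of_lt ht0z0)
      · exact h (by rw [Set.uIcc_of_le ht0z0.le]; exact ⟨ht0z0.le, le_rfl⟩)
  have hnorm := intervalIntegral.norm_integral_le_of_norm_le_const main
  calc (∫ z' in (0:ℝ)..z0, ∫ z in z'..z0, Real.exp (-∫ y in z'..z, f y) * binv z)
      ≤ ‖∫ z' in (0:ℝ)..z0, ∫ z in z'..z0, Real.exp (-∫ y in z'..z, f y) * binv z‖ :=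
        le_abs_self _
    _ ≤ 1 / C * |z0 - 0| := hnorm
    _ = z0 / C := by rw [sub_zero, abs_of_nonneg hz0.le]; ring
end
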